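/- Let G be a connected graph of order n ≥ 6 with at least two dominating vertices. Then ξ^c(G) ≥ 6n - 10, with equality if and only if G is isomorphic to S_{n,2}, the graph obtained by joining every vertex of an independent set of n-2 vertices to both vertices of an edge. -/

import Mathlib

open SimpleGraph Finset

noncomputable def deg {V : Type*} (G : SimpleGraph V) [Fintype V] (v : V) : ℕ :=
  letI := Classical.decRel G.Adj; G.degree v

noncomputable def ecc {V : Type*} (G : SimpleGraph V) [Fintype V] (v : V) : ℕ :=
  Finset.univ.sup (fun w => G.dist v w)

noncomputable def eci {V : Type*} (G : SimpleGraph V) [Fintype V] : ℕ :=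
  ∑ v, deg G v * ecc G v

noncomputable def pendingCount {V : Type*} (G : SimpleGraph V) [Fintype V] : ℕ :=
  (Finset.univ.filter (fun v => deg G v = 1)).card

/-- Join of an edge with an empty graph on n - 2 vertices. -/
def Sn2 (n : ℕ) : SimpleGraph (Fin n) :=
  SimpleGraph.fromRel (fun v w => v.val < 2 ∨ w.val < 2)

section Helpers

variable {n : ℕ} {G : SimpleGraph (Fin n)}

lemma deg_le {v : Fin n} : deg G v ≤ n - 1 := by
  letI := Classical.decRel G.Adj
  show G.degree v ≤ n - 1
  have := G.degree_lt_card_verts v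
  rw [Fintype.card_fin] at this
  omega

lemma neighborFinset_subset_erase (v : Fin n) :
    letI := Classical.decRel G.Adj
    G.neighborFinset v ⊆ Finset.univ.erase v := by
  letI := Classical.decRel G.Adj
  intro x hx
  rw [SimpleGraph.mem_neighborFinset] at hx
  exact Finset.mem_erase.mpr ⟨(G.ne_of_adj hx).symm, Finset.mem_univ x⟩

lemma dom_neighborFinset {v : Fin n} (hv : deg G v = n - 1) :
    letI := Classical.decRel G.Adj
    G.neighborFinset v = Finset.univ.erase v := by
  letI := Classical.decRel G.Adj
  apply Finset.eq_of_subset_of_card_le (neighborFinset_subset_erase v)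
  rw [Finset.card_erase_of_mem (Finset.mem_univ v), Finset.card_univ, Fintype.card_fin,
    SimpleGraph.card_neighborFinset_eq_degree]
  have : deg G v = G.degree v := rfl
  omega

lemma dom_adj {v w : Fin n} (hv : deg G v = n - 1) (hw : w ≠ v) : G.Adj v w := by
  letI := Classical.decRel G.Adj
  have h := dom_neighborFinset hv
  have : w ∈ G.neighborFinset v := by
    rw [h]
    exact Finset.mem_erase.mpr ⟨hw, Finset.mem_univ w⟩
  rwa [SimpleGraph.mem_neighborFinset] at this

lemma nondom_exists_nonadj {v : Fin n} (hv : deg G v ≠ n - 1) :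
    ∃ w, w ≠ v ∧ ¬ G.Adj v w := by
  letI := Classical.decRel G.Adj
  have hsub := neighborFinset_subset_erase (G := G) v
  have hne : G.neighborFinset v ≠ Finset.univ.erase v := by
    intro h
    apply hv
    show G.degree v = n - 1
    rw [← SimpleGraph.card_neighborFinset_eq_degree, h,
      Finset.card_erase_of_mem (Finset.mem_univ v), Finset.card_univ, Fintype.card_fin]
  obtain ⟨w, hw1, hw2⟩ := Finset.exists_of_ssubset (hsub.ssubset_of_ne hne)
  refine ⟨w, (Finset.mem_erase.mp hw1).1, ?_⟩
  rwa [SimpleGraph.mem_neighborFinset] at hw2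

lemma ecc_dom (hn : 2 ≤ n) {v : Fin n} (hv : deg G v = n - 1) : ecc G v = 1 := by
  apply le_antisymm
  · apply Finset.sup_le
    intro w _
    rcases eq_or_ne w v with rfl | hw
    · simp [SimpleGraph.dist_self]
    · have := SimpleGraph.dist_le (dom_adj hv hw).toWalk
      simpa using this
  · obtain ⟨w, hw⟩ : ∃ w : Fin n, w ≠ v := by
      refine Fintype.exists_ne_of_one_lt_card ?_ v
      rw [Fintype.card_fin]; omega
    have h1 : G.dist v w = 1 :=
      SimpleGraph.dist_eq_one_iff_adj.mpr (dom_adj hv hw)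
    calc 1 = G.dist v w := h1.symm
    _ ≤ _ := Finset.le_sup (Finset.mem_univ w)

lemma ecc_nondom (hc : G.Connected) {a b v : Fin n} (hab : a ≠ b)
    (ha : deg G a = n - 1) (hb : deg G b = n - 1) (hv : deg G v ≠ n - 1) :
    ecc G v = 2 := by
  apply le_antisymm
  · apply Finset.sup_le
    intro w _
    rcases eq_or_ne w v with rfl | hwv
    · simp [SimpleGraph.dist_self]
    · obtain ⟨u, hu, huw⟩ : ∃ u, deg G u = n - 1 ∧ u ≠ w := by
        rcases eq_or_ne a w with rfl | h
        · exact ⟨b, hb, fun h => hab h.symm⟩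
        · exact ⟨a, ha, h⟩
      have huv : u ≠ v := fun h => hv (h ▸ hu)
      have w1 : G.Adj v u := (dom_adj hu huv.symm).symm
      have w2 : G.Adj u w := dom_adj hu huw.symm
      have := SimpleGraph.dist_le (SimpleGraph.Walk.cons w1 w2.toWalk)
      simpa using this
  · obtain ⟨w, hw, hnadj⟩ := nondom_exists_nonadj hv
    have h0 : G.dist v w ≠ 0 := by
      have := hc.pos_dist_of_ne (Ne.symm hw)
      omega
    have h1 : G.dist v w ≠ 1 := fun h =>
      hnadj (SimpleGraph.dist_eq_one_iff_adj.mp h)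
    have h2 : 2 ≤ G.dist v w := by omega
    exact h2.trans (Finset.le_sup (Finset.mem_univ w))

lemma two_le_deg_nondom {a b v : Fin n} (hab : a ≠ b)
    (ha : deg G a = n - 1) (hb : deg G b = n - 1) (hv : deg G v ≠ n - 1) :
    2 ≤ deg G v := by
  letI := Classical.decRel G.Adj
  have hva : v ≠ a := fun h => hv (h ▸ ha)
  have hvb : v ≠ b := fun h => hv (h ▸ hb)
  have h1 : G.Adj v a := (dom_adj ha hva).symm
  have h2 : G.Adj v b := (dom_adj hb hvb).symm
  have hsub : ({a, b} : Finset (Fin n)) ⊆ G.neighborFinset v := by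
    intro x hx
    rw [SimpleGraph.mem_neighborFinset]
    rcases Finset.mem_insert.mp hx with rfl | hx
    · exact h1
    · rw [Finset.mem_singleton.mp hx]; exact h2
  calc 2 = ({a, b} : Finset (Fin n)).card := (Finset.card_pair hab).symm
  _ ≤ (G.neighborFinset v).card := Finset.card_le_card hsub
  _ = deg G v := rfl

/-- Split of the eccentric connectivity index along dominating vertices. -/
lemma eci_split (hn : 6 ≤ n) (hc : G.Connected) {a b : Fin n} (hab : a ≠ b)
    (ha : deg G a = n - 1) (hb : deg G b = n - 1) :
    eci G = (Finset.univ.filter (fun v => deg G v = n - 1)).card * (n - 1)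
      + 2 * ∑ v ∈ Finset.univ.filter (fun v => ¬ deg G v = n - 1), deg G v := by
  rw [eci, ← Finset.sum_filter_add_sum_filter_not Finset.univ (fun v => deg G v = n - 1)]
  congr 1
  · rw [Finset.sum_congr rfl (fun v hv => ?_), Finset.sum_const, smul_eq_mul]
    rw [Finset.mem_filter] at hv
    rw [hv.2, ecc_dom (by omega) hv.2, mul_one]
  · rw [Finset.mul_sum, Finset.sum_congr rfl (fun v hv => ?_)]
    rw [Finset.mem_filter] at hv
    rw [ecc_nondom hc hab ha hb hv.2]
    ring

lemma arith (n d S : ℕ) (hn : 6 ≤ n) (hd : 2 ≤ d) (hdn : d ≤ n)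
    (hS : 2 * (n - d) ≤ S) :
    6 * n - 10 ≤ d * (n - 1) + 2 * S ∧
      (d * (n - 1) + 2 * S = 6 * n - 10 → d = 2 ∧ S = 2 * (n - 2)) := by
  obtain ⟨m, rfl⟩ : ∃ m, n = m + 6 := ⟨n - 6, by omega⟩
  obtain ⟨e, rfl⟩ : ∃ e, d = e + 2 := ⟨d - 2, by omega⟩
  have hexp : (e + 2) * ((m + 6) - 1) = e * m + 5 * e + 2 * m + 10 := by
    rw [show m + 6 - 1 = m + 5 from by omega]; ring
  rw [hexp]
  generalize e * m = q at hexp ⊢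
  omega

lemma struct_eci (hn : 6 ≤ n) (hc : G.Connected) {a b : Fin n} (hab : a ≠ b)
    (hAdj : ∀ v w, G.Adj v w ↔ (v ≠ w ∧ (v = a ∨ v = b ∨ w = a ∨ w = b))) :
    eci G = 6 * n - 10 := by
  letI := Classical.decRel G.Adj
  have ha : deg G a = n - 1 := by
    show G.degree a = n - 1
    rw [← SimpleGraph.card_neighborFinset_eq_degree]
    have : G.neighborFinset a = Finset.univ.erase a := by
      ext x
      rw [SimpleGraph.mem_neighborFinset, hAdj, Finset.mem_erase]
      constructor
      · exact fun h => ⟨(h.1).symm, Finset.mem_univ x⟩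
      · exact fun h => ⟨(h.1).symm, Or.inl rfl⟩
    rw [this, Finset.card_erase_of_mem (Finset.mem_univ a), Finset.card_univ,
      Fintype.card_fin]
  have hb : deg G b = n - 1 := by
    show G.degree b = n - 1
    rw [← SimpleGraph.card_neighborFinset_eq_degree]
    have : G.neighborFinset b = Finset.univ.erase b := by
      ext x
      rw [SimpleGraph.mem_neighborFinset, hAdj, Finset.mem_erase]
      constructor
      · exact fun h => ⟨(h.1).symm, Finset.mem_univ x⟩
      · exact fun h => ⟨(h.1).symm, Or.inr (Or.inl rfl)⟩
    rw [this, Finset.card_erase_of_mem (Finset.mem_univ b), Finset.card_univ,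
      Fintype.card_fin]
  have hother : ∀ v : Fin n, v ≠ a → v ≠ b → deg G v = 2 := by
    intro v hva hvb
    show G.degree v = 2
    rw [← SimpleGraph.card_neighborFinset_eq_degree]
    have : G.neighborFinset v = {a, b} := by
      ext x
      rw [SimpleGraph.mem_neighborFinset, hAdj, Finset.mem_insert, Finset.mem_singleton]
      constructor
      · rintro ⟨hne, (rfl | rfl | rfl | rfl)⟩
        · exact absurd rfl hva
        · exact absurd rfl hvb
        · exact Or.inl rfl
        · exact Or.inr rfl
      · rintro (rfl | rfl)
        · exact ⟨hva, Or.inr (Or.inr (Or.inl rfl))⟩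
        · exact ⟨hvb, Or.inr (Or.inr (Or.inr rfl))⟩
    rw [this, Finset.card_pair hab]
  have hD : Finset.univ.filter (fun v => deg G v = n - 1) = {a, b} := by
    ext v
    rw [Finset.mem_filter, Finset.mem_insert, Finset.mem_singleton]
    constructor
    · rintro ⟨-, hv⟩
      by_contra h
      push_neg at h
      rw [hother v h.1 h.2] at hv
      omega
    · rintro (rfl | rfl)
      · exact ⟨Finset.mem_univ _, ha⟩
      · exact ⟨Finset.mem_univ _, hb⟩
  rw [eci_split hn hc hab ha hb, hD, Finset.card_pair hab]
  have hcard : (Finset.univ.filter (fun v => ¬ deg G v = n - 1)).card = n - 2 := by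
    have h := Finset.card_filter_add_card_filter_not
      (s := (Finset.univ : Finset (Fin n))) (p := fun v => deg G v = n - 1)
    rw [hD, Finset.card_pair hab, Finset.card_univ, Fintype.card_fin] at h
    omega
  have hsum : ∑ v ∈ Finset.univ.filter (fun v => ¬ deg G v = n - 1), deg G v
      = 2 * (n - 2) := by
    rw [Finset.sum_congr rfl (fun v hv => ?_), Finset.sum_const, smul_eq_mul, hcard,
      mul_comm]
    rw [Finset.mem_filter] at hv
    have hva : v ≠ a := by rintro rfl; exact hv.2 ha
    have hvb : v ≠ b := by rintro rfl; exact hv.2 hb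
    exact hother v hva hvb
  rw [hsum]
  have h2n : 2 ≤ n - 2 := by omega
  omega

lemma struct_iso (hn : 6 ≤ n) {a b : Fin n} (hab : a ≠ b)
    (hAdj : ∀ v w, G.Adj v w ↔ (v ≠ w ∧ (v = a ∨ v = b ∨ w = a ∨ w = b))) :
    Nonempty (G ≃g Sn2 n) := by
  set x0 : Fin n := ⟨0, by omega⟩ with hx0
  set x1 : Fin n := ⟨1, by omega⟩ with hx1
  have hx01 : x0 ≠ x1 := by
    simp [hx0, hx1, Fin.ext_iff]
  set σ : Equiv.Perm (Fin n) := Equiv.swap a x0 with hσ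
  set e : Equiv.Perm (Fin n) := σ.trans (Equiv.swap (σ b) x1) with he
  have hσb : σ b ≠ x0 := by
    intro h
    have : b = a := by
      have := congrArg σ h
      rwa [Equiv.swap_apply_self, Equiv.swap_apply_right] at this
    exact hab this.symm
  have hea : e a = x0 := by
    rw [he, Equiv.trans_apply, hσ, Equiv.swap_apply_left,
      Equiv.swap_apply_of_ne_of_ne (Ne.symm hσb) hx01]
  have heb : e b = x1 := by
    rw [he, Equiv.trans_apply, Equiv.swap_apply_left]
  have hmem : ∀ v : Fin n, ((e v).val < 2 ↔ (v = a ∨ v = b)) := by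
    intro v
    constructor
    · intro h
      have h' : e v = x0 ∨ e v = x1 := by
        have : (e v).val = 0 ∨ (e v).val = 1 := by omega
        rcases this with h' | h'
        · exact Or.inl (Fin.ext h')
        · exact Or.inr (Fin.ext h')
      rcases h' with h' | h'
      · exact Or.inl (e.injective (h'.trans hea.symm))
      · exact Or.inr (e.injective (h'.trans heb.symm))
    · rintro (rfl | rfl)
      · rw [hea]; norm_num [hx0]
      · rw [heb]; norm_num [hx1]
  refine ⟨⟨e, ?_⟩⟩
  intro v w
  simp only [Sn2, SimpleGraph.fromRel_adj, hAdj, hmem, ne_eq, Equiv.apply_eq_iff_eq]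
  tauto

lemma iso_struct (hn : 6 ≤ n) (f : G ≃g Sn2 n) :
    ∃ a b : Fin n, a ≠ b ∧
      ∀ v w, G.Adj v w ↔ (v ≠ w ∧ (v = a ∨ v = b ∨ w = a ∨ w = b)) := by
  set x0 : Fin n := ⟨0, by omega⟩ with hx0
  set x1 : Fin n := ⟨1, by omega⟩ with hx1
  refine ⟨f.symm x0, f.symm x1, ?_, ?_⟩
  · intro h
    have : x0 = x1 := f.symm.injective h
    simp [hx0, hx1, Fin.ext_iff] at this
  · intro v w
    have hval : ∀ u : Fin n, ((f u).val < 2 ↔ (u = f.symm x0 ∨ u = f.symm x1)) := by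
      intro u
      constructor
      · intro h
        have h2 : (f u).val = 0 ∨ (f u).val = 1 := by omega
        rcases h2 with h' | h'
        · left
          have : f u = x0 := Fin.ext h'
          rw [← this, RelIso.symm_apply_apply]
        · right
          have : f u = x1 := Fin.ext h'
          rw [← this, RelIso.symm_apply_apply]
      · rintro (rfl | rfl) <;> simp [RelIso.apply_symm_apply, hx0, hx1]
    rw [← f.map_adj_iff]
    simp only [Sn2, SimpleGraph.fromRel_adj, hval, ne_eq, f.injective.eq_iff]
    have h1 := hval v
    have h2 := hval w
    have h3 : f v = f w ↔ v = w := f.injective.eq_iff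
    tauto

end Helpers

theorem stmt4 (n : ℕ) (hn : 6 ≤ n) (G : SimpleGraph (Fin n)) (hc : G.Connected)
    (hdom : 2 ≤ (Finset.univ.filter (fun v => deg G v = n - 1)).card) :
    6 * n - 10 ≤ eci G ∧ (eci G = 6 * n - 10 ↔ Nonempty (G ≃g Sn2 n)) := by
  classical
  set D := Finset.univ.filter (fun v => deg G v = n - 1) with hD
  obtain ⟨a, haD, b, hbD, hab⟩ := Finset.one_lt_card.mp (by omega : 1 < D.card)
  rw [hD, Finset.mem_filter] at haD hbD
  have ha : deg G a = n - 1 := haD.2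
  have hb : deg G b = n - 1 := hbD.2
  have hsplit := eci_split hn hc hab ha hb
  rw [← hD] at hsplit
  set S := ∑ v ∈ Finset.univ.filter (fun v => ¬ deg G v = n - 1), deg G v with hS
  have hcard : D.card + (Finset.univ.filter (fun v => ¬ deg G v = n - 1)).card = n := by
    have h := Finset.card_filter_add_card_filter_not
      (s := (Finset.univ : Finset (Fin n))) (p := fun v => deg G v = n - 1)
    rw [← hD, Finset.card_univ, Fintype.card_fin] at h
    exact h
  have hdn : D.card ≤ n := by omega
  have hSlb : 2 * (n - D.card) ≤ S := by
    have : ∀ v ∈ Finset.univ.filter (fun v => ¬ deg G v = n - 1), 2 ≤ deg G v :=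
      fun v hv => two_le_deg_nondom hab ha hb (Finset.mem_filter.mp hv).2
    calc 2 * (n - D.card)
        = ∑ _v ∈ Finset.univ.filter (fun v => ¬ deg G v = n - 1), 2 := by
          rw [Finset.sum_const, smul_eq_mul, mul_comm]
          congr 1
          omega
      _ ≤ S := Finset.sum_le_sum this
  obtain ⟨hineq, heq⟩ := arith n D.card S hn hdom hdn hSlb
  rw [← hsplit] at hineq heq
  refine ⟨hineq, ?_, fun ⟨f⟩ => ?_⟩
  · -- equality → iso
    intro h
    obtain ⟨hd2, hS2⟩ := heq h
    -- all non-dominating vertices have degree exactly 2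
    have hall : ∀ v ∈ Finset.univ.filter (fun v => ¬ deg G v = n - 1), deg G v = 2 := by
      by_contra hcon
      push_neg at hcon
      obtain ⟨v, hvmem, hvne⟩ := hcon
      have hlt : ∑ _v ∈ Finset.univ.filter (fun v => ¬ deg G v = n - 1), 2 < S := by
        apply Finset.sum_lt_sum
        · exact fun u hu => two_le_deg_nondom hab ha hb (Finset.mem_filter.mp hu).2
        · exact ⟨v, hvmem, lt_of_le_of_ne
            (two_le_deg_nondom hab ha hb (Finset.mem_filter.mp hvmem).2) (Ne.symm hvne)⟩
      rw [Finset.sum_const, smul_eq_mul] at hlt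
      have : (Finset.univ.filter (fun v => ¬ deg G v = n - 1)).card = n - 2 := by omega
      rw [this] at hlt
      omega
    -- D = {a, b}
    have hDab : D = {a, b} := by
      apply (Finset.eq_of_subset_of_card_le ?_ ?_).symm
      · intro x hx
        rcases Finset.mem_insert.mp hx with rfl | hx
        · rw [hD, Finset.mem_filter]; exact ⟨Finset.mem_univ _, ha⟩
        · rw [Finset.mem_singleton.mp hx, hD, Finset.mem_filter]
          exact ⟨Finset.mem_univ _, hb⟩
      · rw [Finset.card_pair hab, hd2]
    letI := Classical.decRel G.Adj
    have hAdj : ∀ v w, G.Adj v w ↔ (v ≠ w ∧ (v = a ∨ v = b ∨ w = a ∨ w = b)) := by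
      intro v w
      constructor
      · intro hvw
        refine ⟨G.ne_of_adj hvw, ?_⟩
        by_contra hcon
        push_neg at hcon
        obtain ⟨hva, hvb, hwa, hwb⟩ := hcon
        -- v is not dominating
        have hvD : v ∉ D := by
          rw [hDab]
          simp [hva, hvb]
        have hvmem : v ∈ Finset.univ.filter (fun v => ¬ deg G v = n - 1) := by
          rw [Finset.mem_filter]
          refine ⟨Finset.mem_univ _, fun h => hvD ?_⟩
          rw [hD, Finset.mem_filter]; exact ⟨Finset.mem_univ _, h⟩
        have hdv : deg G v = 2 := hall v hvmem
        have hvdom : deg G v ≠ n - 1 := (Finset.mem_filter.mp hvmem).2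
        -- neighborFinset v = {a, b}
        have hnb : G.neighborFinset v = {a, b} := by
          symm
          apply Finset.eq_of_subset_of_card_le
          · intro x hx
            rw [SimpleGraph.mem_neighborFinset]
            rcases Finset.mem_insert.mp hx with rfl | hx
            · exact (dom_adj ha hva).symm
            · rw [Finset.mem_singleton.mp hx]
              exact (dom_adj hb hvb).symm
          · rw [SimpleGraph.card_neighborFinset_eq_degree, Finset.card_pair hab]
            exact le_of_eq hdv
        have : w ∈ G.neighborFinset v := (SimpleGraph.mem_neighborFinset _ _ _).mpr hvw
        rw [hnb, Finset.mem_insert, Finset.mem_singleton] at this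
        tauto
      · rintro ⟨hne, (rfl | rfl | rfl | rfl)⟩
        · exact dom_adj ha (Ne.symm hne)
        · exact dom_adj hb (Ne.symm hne)
        · exact (dom_adj ha hne).symm
        · exact (dom_adj hb hne).symm
    exact struct_iso hn hab hAdj
  · -- iso → equality
    obtain ⟨a', b', hab', hAdj'⟩ := iso_struct hn f
    exact struct_eci hn hc hab' hAdj'
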